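/- For every x ∈ A one has T(X⁻¹·T(x)) = τ·Y⁻¹·x. Equivalently (when τ is nonzero, so that T is invertible with T⁻¹ = τ⁻¹·(T − (τ−1)·id)), T⁻¹ ∘ (multiplication by Y⁻¹) = τ⁻¹ · (multiplication by X⁻¹) ∘ T as operators on A. -/

import Mathlib

open AddMonoidAlgebra

/-- The Laurent polynomial ring `K[X^{±1}, Y^{±1}]` in two variables,
realized as the monoid algebra of `ℤ × ℤ` over `K`. -/
abbrev LP2 (K : Type*) [Field K] := AddMonoidAlgebra K (ℤ × ℤ)

/-- The variable `X`. -/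
noncomputable def Xv (K : Type*) [Field K] : LP2 K := of' K (ℤ × ℤ) (1, 0)

/-- The variable `Y`. -/
noncomputable def Yv (K : Type*) [Field K] : LP2 K := of' K (ℤ × ℤ) (0, 1)

/-- `X⁻¹`. -/
noncomputable def Xinv (K : Type*) [Field K] : LP2 K := of' K (ℤ × ℤ) (-1, 0)

/-- `Y⁻¹`. -/
noncomputable def Yinv (K : Type*) [Field K] : LP2 K := of' K (ℤ × ℤ) (0, -1)

/-- The `K`-algebra involution of `K[X^{±1}, Y^{±1}]` swapping `X` and `Y`. -/
noncomputable def swapXY (K : Type*) [Field K] : LP2 K ≃ₐ[K] LP2 K :=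
  AddMonoidAlgebra.domCongr K K (AddEquiv.prodComm : ℤ × ℤ ≃+ ℤ × ℤ)

/-- Suppose `𝒯` satisfies the quadratic relation `𝒯² = (τ−1)·𝒯 + τ·id` and the
denominator-cleared Bernstein relation
`(X − Y)·(𝒯(h·x) − h^s·𝒯(x)) = (τ−1)·X·(h − h^s)·x`. Then
`𝒯(X⁻¹·𝒯(x)) = τ·Y⁻¹·x` for every `x`; equivalently (when `τ ≠ 0`),
`𝒯⁻¹ ∘ (mult. by Y⁻¹) = τ⁻¹·(mult. by X⁻¹) ∘ 𝒯`. -/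
theorem statement13 {K : Type*} [Field K] (τ : K)
    (𝒯 : LP2 K →ₗ[K] LP2 K)
    (hquad : ∀ x : LP2 K, 𝒯 (𝒯 x) = (τ - 1) • 𝒯 x + τ • x)
    (hcomm : ∀ h x : LP2 K,
      (Xv K - Yv K) * (𝒯 (h * x) - swapXY K h * 𝒯 x)
        = (τ - 1) • (Xv K * ((h - swapXY K h) * x)))
    (x : LP2 K) :
    𝒯 (Xinv K * 𝒯 x) = τ • (Yinv K * x) := by
  classical
  have hXYne : Xv K - Yv K ≠ 0 := by
    intro h
    have h2 : (Xv K - Yv K).coeff (1, 0) = 0 := by rw [h]; rfl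
    simp [Xv, Yv, of'_apply, AddMonoidAlgebra.coeff_single_apply] at h2
  have hswap : swapXY K (Xinv K) = Yinv K := by
    simp [swapXY, Xinv, Yinv, of'_apply]
  have hXXi : Xv K * Xinv K = 1 := by
    simp [Xv, Xinv, of'_apply, AddMonoidAlgebra.single_mul_single,
      AddMonoidAlgebra.one_def]; rfl
  have hYYi : Yv K * Yinv K = 1 := by
    simp [Yv, Yinv, of'_apply, AddMonoidAlgebra.single_mul_single,
      AddMonoidAlgebra.one_def]; rfl
  have key : ∀ u : LP2 K,
      𝒯 (Xinv K * u) = Yinv K * 𝒯 u - (τ - 1) • (Yinv K * u) := by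
    intro u
    have h := hcomm (Xinv K) u
    rw [hswap] at h
    have e1 : Xv K * ((Xinv K - Yinv K) * u) = (1 - Xv K * Yinv K) * u := by
      rw [← hXXi]; ring
    have e2 : (Xv K - Yv K) * (Yinv K * u) = -((1 - Xv K * Yinv K) * u) := by
      rw [← hYYi]; ring
    have h' : (Xv K - Yv K) * (𝒯 (Xinv K * u) - Yinv K * 𝒯 u)
        = (Xv K - Yv K) * (-((τ - 1) • (Yinv K * u))) := by
      rw [h, e1, mul_neg, mul_smul_comm, e2, smul_neg, neg_neg]
    have h2 := mul_left_cancel₀ hXYne h'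
    have h3 := sub_eq_iff_eq_add.mp h2
    rw [h3]; abel
  rw [key (𝒯 x), hquad x]
  rw [mul_add, mul_smul_comm, mul_smul_comm]
  abel
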